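/- Let x : [0,T] → E be a continuous path into a metric space of finite p-variation for some p ≥ 1, and let ω_x(s,t) = ‖x‖_{p-var;[s,t]}^p be its control. Fix r > 0 and let (σ_n) be the greedy partition at scale r with N = N₀^r(x,[0,T]) finite. Then M(x,[0,T]) ≤ N + Σ_{j=1}^{N} ω_x(σ_{j-1}, σ_j) + ω_x(σ_N, T), where M(x,[0,T]) = sup over partitions D with ω_x(t_i,t_{i+1}) ≤ 1 of Σ ω_x(t_i,t_{i+1}). -/

import Mathlib

/-- The set of partition sums defining the `p`-variation of `x` over `[s,t]`. -/
def pVarSet {E : Type*} [PseudoMetricSpace E] (x : ℝ → E) (p s t : ℝ) : Set ℝ :=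
  {S : ℝ | ∃ (n : ℕ) (u : ℕ → ℝ), u 0 = s ∧ u n = t ∧ (∀ i < n, u i ≤ u (i + 1)) ∧
    S = ∑ i ∈ Finset.range n, dist (x (u i)) (x (u (i + 1))) ^ p}

/-- `ω_x(s,t) = ‖x‖_{p-var;[s,t]}^p`, the control induced by `x`. -/
noncomputable def pVarControl {E : Type*} [PseudoMetricSpace E] (x : ℝ → E) (p s t : ℝ) : ℝ :=
  sSup (pVarSet x p s t)

/-- The accumulated local `p`-variation `M(x,[0,T])`. -/
noncomputable def accLocPVar {E : Type*} [PseudoMetricSpace E] (x : ℝ → E) (p T : ℝ) : ℝ :=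
  sSup {S : ℝ | ∃ (n : ℕ) (t : ℕ → ℝ), t 0 = 0 ∧ t n = T ∧
    (∀ i < n, t i < t (i + 1)) ∧ (∀ i < n, pVarControl x p (t i) (t (i + 1)) ≤ 1) ∧
    S = ∑ i ∈ Finset.range n, pVarControl x p (t i) (t (i + 1))}

section Aux

variable {E : Type*} [PseudoMetricSpace E] (x : ℝ → E) (p : ℝ)

lemma mem_pVarSet_single {a b : ℝ} (hab : a ≤ b) :
    dist (x a) (x b) ^ p ∈ pVarSet x p a b := by
  refine ⟨1, fun i => if i = 0 then a else b, by norm_num, by norm_num, ?_, by simp⟩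
  intro i hi
  have : i = 0 := by omega
  subst this
  simpa using hab

lemma pVarSet_nonempty {a b : ℝ} (hab : a ≤ b) : (pVarSet x p a b).Nonempty :=
  ⟨_, mem_pVarSet_single x p hab⟩

lemma pVarControl_nonneg {a b : ℝ} (hab : a ≤ b) (hbdd : BddAbove (pVarSet x p a b)) :
    0 ≤ pVarControl x p a b :=
  le_trans (Real.rpow_nonneg dist_nonneg p) (le_csSup hbdd (mem_pVarSet_single x p hab))

lemma pVarSet_add_mem {a c b S1 S2 : ℝ} (h1 : S1 ∈ pVarSet x p a c)
    (h2 : S2 ∈ pVarSet x p c b) : S1 + S2 ∈ pVarSet x p a b := by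
  obtain ⟨m, u, hu0, hum, hmon, hS1⟩ := h1
  obtain ⟨k, v, hv0, hvk, hvmon, hS2⟩ := h2
  refine ⟨m + k, fun i => if i ≤ m then u i else v (i - m), ?_, ?_, ?_, ?_⟩
  · simp [hu0]
  · rcases Nat.eq_zero_or_pos k with hk | hk
    · subst hk
      have : v 0 = b := hvk
      simp only [Nat.add_zero, if_pos (le_refl m), hum]
      rw [← hv0, this]
    · have h' : ¬ (m + k ≤ m) := by omega
      have e : m + k - m = k := by omega
      simp only [if_neg h', e, hvk]
  · intro i hi
    rcases lt_trichotomy i m with h | h | h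
    · have h1' : i ≤ m := le_of_lt h
      have h2' : i + 1 ≤ m := h
      simp only [if_pos h1', if_pos h2']
      exact hmon i h
    · subst h
      have hk : 0 < k := by omega
      have h2' : ¬ (i + 1 ≤ i) := by omega
      have e : i + 1 - i = 1 := by omega
      simp only [if_pos (le_refl i), if_neg h2', e]
      rw [hum, ← hv0]
      exact hvmon 0 hk
    · have h1' : ¬ (i ≤ m) := by omega
      have h2' : ¬ (i + 1 ≤ m) := by omega
      simp only [if_neg h1', if_neg h2']
      have e : i + 1 - m = (i - m) + 1 := by omega
      rw [e]
      exact hvmon (i - m) (by omega)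
  · rw [hS1, hS2, Finset.sum_range_add]
    congr 1
    · apply Finset.sum_congr rfl
      intro i hi
      simp only [Finset.mem_range] at hi
      have h1' : i ≤ m := by omega
      have h2' : i + 1 ≤ m := by omega
      simp [h1', h2']
    · apply Finset.sum_congr rfl
      intro i hi
      simp only [Finset.mem_range] at hi
      have h2' : ¬ (m + i + 1 ≤ m) := by omega
      have e : m + i + 1 - m = i + 1 := by omega
      by_cases h0 : i = 0
      · subst h0
        have e1 : m + 0 + 1 - m = 0 + 1 := by omega
        simp only [h2', e1, if_neg, if_false, Nat.add_zero, le_refl, if_pos, if_true, hum,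
          ← hv0]
      · have h1' : ¬ (m + i ≤ m) := by omega
        have e2 : m + i - m = i := by omega
        simp [h1', h2', e, e2]

lemma pVarControl_superadd {a c b : ℝ} (hac : a ≤ c) (hcb : c ≤ b)
    (hbdd : BddAbove (pVarSet x p a b)) :
    pVarControl x p a c + pVarControl x p c b ≤ pVarControl x p a b := by
  have key : ∀ S1 ∈ pVarSet x p a c, ∀ S2 ∈ pVarSet x p c b,
      S1 + S2 ≤ pVarControl x p a b := fun S1 h1 S2 h2 =>
    le_csSup hbdd (pVarSet_add_mem x p h1 h2)
  have h1 : ∀ S1 ∈ pVarSet x p a c, S1 + pVarControl x p c b ≤ pVarControl x p a b := by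
    intro S1 hS1
    have h2 : sSup (pVarSet x p c b) ≤ pVarControl x p a b - S1 :=
      csSup_le (pVarSet_nonempty x p hcb) (fun S2 hS2 => by
        have := key S1 hS1 S2 hS2; linarith)
    have h3 : pVarControl x p c b ≤ pVarControl x p a b - S1 := h2
    linarith
  have h2 : sSup (pVarSet x p a c) ≤ pVarControl x p a b - pVarControl x p c b :=
    csSup_le (pVarSet_nonempty x p hac) (fun S1 hS1 => by
      have := h1 S1 hS1; linarith)
  have h3 : pVarControl x p a c ≤ pVarControl x p a b - pVarControl x p c b := h2
  linarith

lemma pVarControl_mono {T : ℝ}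
    (hfin : ∀ s t : ℝ, 0 ≤ s → s ≤ t → t ≤ T → BddAbove (pVarSet x p s t))
    {a a' b' b : ℝ} (ha : 0 ≤ a) (h1 : a ≤ a') (h2 : a' ≤ b') (h3 : b' ≤ b) (hb : b ≤ T) :
    pVarControl x p a' b' ≤ pVarControl x p a b := by
  have hb1 := hfin a b ha (by linarith) hb
  have hb2 := hfin a' b (by linarith) (by linarith) hb
  have s1 := pVarControl_superadd x p h1 (le_trans h2 h3) hb1
  have s2 := pVarControl_superadd x p h2 h3 hb2
  have n1 := pVarControl_nonneg x p h1 (hfin a a' ha h1 (by linarith))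
  have n2 := pVarControl_nonneg x p h3 (hfin b' b (by linarith) h3 hb)
  linarith

lemma sum_pVarControl_le {T : ℝ}
    (hfin : ∀ s t : ℝ, 0 ≤ s → s ≤ t → t ≤ T → BddAbove (pVarSet x p s t))
    (t : ℕ → ℝ) :
    ∀ (K : ℕ) (I : Finset ℕ) (a b : ℝ), I.card ≤ K → 0 ≤ a → a ≤ b → b ≤ T →
      (∀ i ∈ I, ∀ j ∈ I, i < j → t (i + 1) ≤ t j) →
      (∀ i ∈ I, a ≤ t i ∧ t i ≤ t (i + 1) ∧ t (i + 1) ≤ b) →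
      ∑ i ∈ I, pVarControl x p (t i) (t (i + 1)) ≤ pVarControl x p a b := by
  intro K
  induction K with
  | zero =>
    intro I a b hcard ha hab hb _ _
    have hI : I = ∅ := Finset.card_eq_zero.mp (Nat.le_zero.mp hcard)
    subst hI
    simpa using pVarControl_nonneg x p hab (hfin a b ha hab hb)
  | succ K ih =>
    intro I a b hcard ha hab hb hpair hmem
    rcases I.eq_empty_or_nonempty with h | hne
    · subst h
      simpa using pVarControl_nonneg x p hab (hfin a b ha hab hb)
    · set m := I.max' hne with hm
      have hmI : m ∈ I := I.max'_mem hne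
      obtain ⟨ham, hstep, hmb⟩ := hmem m hmI
      have hrec : ∑ i ∈ I.erase m, pVarControl x p (t i) (t (i + 1))
          ≤ pVarControl x p a (t m) := by
        apply ih (I.erase m) a (t m)
        · have := Finset.card_erase_of_mem hmI
          omega
        · exact ha
        · exact ham
        · linarith
        · intro i hi j hj hij
          exact hpair i (Finset.mem_of_mem_erase hi) j (Finset.mem_of_mem_erase hj) hij
        · intro i hi
          have hiI := Finset.mem_of_mem_erase hi
          obtain ⟨h1, h2, _⟩ := hmem i hiI
          refine ⟨h1, h2, ?_⟩
          have hlt : i < m := lt_of_le_of_ne (I.le_max' i hiI) (Finset.ne_of_mem_erase hi)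
          exact hpair i hiI m hmI hlt
      have hsplit := Finset.sum_erase_add I
        (fun i => pVarControl x p (t i) (t (i + 1))) hmI
      have hsup := pVarControl_superadd x p ham hstep
        (hfin a (t (m + 1)) ha (by linarith) (by linarith))
      have hmono := pVarControl_mono x p hfin ha (le_refl a)
        (by linarith : a ≤ t (m + 1)) hmb hb
      calc ∑ i ∈ I, pVarControl x p (t i) (t (i + 1))
          = ∑ i ∈ I.erase m, pVarControl x p (t i) (t (i + 1))
            + pVarControl x p (t m) (t (m + 1)) := hsplit.symm
        _ ≤ pVarControl x p a (t m) + pVarControl x p (t m) (t (m + 1)) := by linarith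
        _ ≤ pVarControl x p a (t (m + 1)) := hsup
        _ ≤ pVarControl x p a b := hmono

end Aux

/-- Key estimate: with `(σ_n)` the greedy partition of `[0,T]` at scale `r` and
`N = N₀^r(x,[0,T])`, the accumulated local `p`-variation satisfies
`M(x,[0,T]) ≤ N + Σ_{j=1}^{N} ω_x(σ_{j-1},σ_j) + ω_x(σ_N, T)`. -/
theorem stmt_12 {E : Type*} [PseudoMetricSpace E] (T : ℝ) (hT : 0 < T)
    (x : ℝ → E) (hcont : Continuous x) (p : ℝ) (hp : 1 ≤ p)
    (hfin : ∀ s t : ℝ, 0 ≤ s → s ≤ t → t ≤ T → BddAbove (pVarSet x p s t))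
    (r : ℝ) (hr : 0 < r) (N : ℕ) (σ : ℕ → ℝ) (hσ0 : σ 0 = 0)
    (hσmono : ∀ n < N, σ n ≤ σ (n + 1))
    (hgreedy : ∀ n < N, σ (n + 1) = sInf {t : ℝ | σ n ≤ t ∧ r ≤ dist (x (σ n)) (x t)})
    (hσlt : ∀ n ≤ N, σ n < T) :
    accLocPVar x p T ≤ (N : ℝ) +
      (∑ j ∈ Finset.range N, pVarControl x p (σ j) (σ (j + 1))) +
      pVarControl x p (σ N) T := by
  classical
  have hσ0le : ∀ j ≤ N, 0 ≤ σ j := by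
    intro j hj
    induction j with
    | zero => simp [hσ0]
    | succ k ih =>
      have hk : k < N := hj
      exact le_trans (ih (le_of_lt hk)) (hσmono k hk)
  set τ : ℕ → ℝ := fun j => if j ≤ N then σ j else T with hτ
  have hτ0 : τ 0 = 0 := by simp [hτ, hσ0]
  have hτT : τ (N + 1) = T := by simp [hτ]
  have hτle : ∀ j, 0 ≤ τ j := by
    intro j
    by_cases hj : j ≤ N
    · simp only [hτ, if_pos hj]; exact hσ0le j hj
    · simp only [hτ, if_neg hj]; exact hT.le
  have hτleT : ∀ j, τ j ≤ T := by
    intro j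
    by_cases hj : j ≤ N
    · simp only [hτ, if_pos hj]; exact (hσlt j hj).le
    · simp only [hτ, if_neg hj]; exact le_rfl
  have hτstep : ∀ j, τ j ≤ τ (j + 1) := by
    intro j
    by_cases hj : j ≤ N
    · rcases lt_or_eq_of_le hj with h | h
      · simp only [hτ, if_pos hj, if_pos (by omega : j + 1 ≤ N)]
        exact hσmono j h
      · subst h
        simp only [hτ, if_pos (le_refl j), if_neg (by omega : ¬ (j + 1 ≤ j))]
        exact (hσlt j le_rfl).le
    · simp only [hτ, if_neg hj, if_neg (by omega : ¬ (j + 1 ≤ N))]; exact le_rfl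
  have hτmono : Monotone τ := monotone_nat_of_le_succ hτstep
  have hRHSsum : ∑ j ∈ Finset.range (N + 1), pVarControl x p (τ j) (τ (j + 1))
      = (∑ j ∈ Finset.range N, pVarControl x p (σ j) (σ (j + 1)))
        + pVarControl x p (σ N) T := by
    rw [Finset.sum_range_succ]
    congr 1
    · apply Finset.sum_congr rfl
      intro j hj
      simp only [Finset.mem_range] at hj
      simp only [hτ, if_pos (by omega : j ≤ N), if_pos (by omega : j + 1 ≤ N)]
    · simp only [hτ, if_pos (le_refl N), if_neg (by omega : ¬ (N + 1 ≤ N))]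
  have hω0 : ∀ j, 0 ≤ pVarControl x p (τ j) (τ (j + 1)) := fun j =>
    pVarControl_nonneg x p (hτstep j) (hfin _ _ (hτle j) (hτstep j) (hτleT (j + 1)))
  have hRHS0 : 0 ≤ (N : ℝ) +
      (∑ j ∈ Finset.range N, pVarControl x p (σ j) (σ (j + 1))) +
      pVarControl x p (σ N) T := by
    have h1 : 0 ≤ ∑ j ∈ Finset.range (N + 1), pVarControl x p (τ j) (τ (j + 1)) :=
      Finset.sum_nonneg fun j _ => hω0 j
    rw [hRHSsum] at h1
    have h2 : (0 : ℝ) ≤ N := Nat.cast_nonneg N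
    linarith
  apply Real.sSup_le _ hRHS0
  rintro S ⟨n, t, ht0, htn, hlt, hle1, rfl⟩
  have htmono : ∀ i j, i ≤ j → j ≤ n → t i ≤ t j := by
    intro i j hij hj
    induction j with
    | zero =>
      have : i = 0 := Nat.le_zero.mp hij
      simp [this]
    | succ k ih =>
      rcases Nat.eq_or_lt_of_le hij with h | h
      · rw [h]
      · have h1 : i ≤ k := by omega
        have h2 : k ≤ n := by omega
        exact le_trans (ih h1 h2) (le_of_lt (hlt k (by omega)))
  have ht0le : ∀ i ≤ n, 0 ≤ t i := fun i hi => ht0 ▸ htmono 0 i (Nat.zero_le i) hi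
  have htleT : ∀ i ≤ n, t i ≤ T := fun i hi => htn ▸ htmono i n hi le_rfl
  set good : ℕ → Prop := fun i => ∃ j, j ≤ N ∧ τ j ≤ t i ∧ t (i + 1) ≤ τ (j + 1) with hgood
  have hclass : ∀ i < n, good i ∨ ∃ j, 1 ≤ j ∧ j ≤ N ∧ t i < τ j ∧ τ j < t (i + 1) := by
    intro i hi
    by_cases hgi : good i
    · exact Or.inl hgi
    · right
      set P : ℕ → Prop := fun j => τ j ≤ t i with hP
      have hP0 : P 0 := by rw [hP]; simp only [hτ0]; exact ht0le i (by omega)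
      set j0 := Nat.findGreatest P N with hj0
      have hPj0 : P j0 := Nat.findGreatest_spec (Nat.zero_le N) hP0
      have hj0N : j0 ≤ N := Nat.findGreatest_le N
      have hj0lt : j0 < N := by
        by_contra h
        have hj0e : j0 = N := by omega
        apply hgi
        refine ⟨N, le_rfl, ?_, ?_⟩
        · rw [← hj0e]; exact hPj0
        · rw [hτT]; exact htleT (i + 1) (by omega)
      have hnot : ¬ P (j0 + 1) :=
        Nat.findGreatest_is_greatest (n := N) (by omega) (by omega)
      refine ⟨j0 + 1, by omega, by omega, not_le.mp hnot, ?_⟩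
      by_contra h
      push_neg at h
      exact hgi ⟨j0, by omega, hPj0, h⟩
  set G := (Finset.range n).filter good with hG
  set B := (Finset.range n).filter (fun i => ¬ good i) with hB
  have hsplit : ∑ i ∈ Finset.range n, pVarControl x p (t i) (t (i + 1))
      = (∑ i ∈ G, pVarControl x p (t i) (t (i + 1)))
        + ∑ i ∈ B, pVarControl x p (t i) (t (i + 1)) :=
    (Finset.sum_filter_add_sum_filter_not _ _ _).symm
  -- bad intervals
  have hwit : ∀ i ∈ B, ∃ j, 1 ≤ j ∧ j ≤ N ∧ t i < τ j ∧ τ j < t (i + 1) := by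
    intro i hi
    simp only [hB, Finset.mem_filter, Finset.mem_range] at hi
    rcases hclass i hi.1 with h | h
    · exact absurd h hi.2
    · exact h
  choose w hw1 hw2 hw3 hw4 using hwit
  have hBrange : ∀ i ∈ B, i < n := by
    intro i hi
    simp only [hB, Finset.mem_filter, Finset.mem_range] at hi
    exact hi.1
  have hBcard : B.card ≤ N := by
    set W : ℕ → ℕ := fun i => if h : i ∈ B then w i h else 0 with hW
    have hcc : B.card ≤ (Finset.Icc 1 N).card := by
      apply Finset.card_le_card_of_injOn W ?_ ?_
      · intro i hi
        simp only [Finset.mem_coe] at hi ⊢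
        simp only [hW, dif_pos hi, Finset.mem_Icc]
        exact ⟨hw1 i hi, hw2 i hi⟩
      · intro i hi i' hi' heq
        simp only [Finset.mem_coe] at hi hi'
        by_contra hne
        have key : ∀ a b, ∀ (ha : a ∈ B) (hb : b ∈ B), a < b → W a ≠ W b := by
          intro a b ha hb hab heqW
          have h1 : τ (w a ha) < t (a + 1) := hw4 a ha
          have h2 : t (a + 1) ≤ t b := htmono (a + 1) b (by omega)
            (by have := hBrange b hb; omega)
          have h3 : t b < τ (w b hb) := hw3 b hb
          have h4 : τ (W a) < τ (W b) := by
            simp only [hW, dif_pos ha, dif_pos hb]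
            calc τ (w a ha) < t (a + 1) := h1
              _ ≤ t b := h2
              _ < τ (w b hb) := h3
          rw [heqW] at h4
          exact lt_irrefl _ h4
        rcases lt_or_gt_of_ne hne with h | h
        · exact key i i' hi hi' h heq
        · exact key i' i hi' hi h heq.symm
    rw [Nat.card_Icc] at hcc
    omega
  have hBsum : ∑ i ∈ B, pVarControl x p (t i) (t (i + 1)) ≤ (N : ℝ) := by
    calc ∑ i ∈ B, pVarControl x p (t i) (t (i + 1)) ≤ ∑ i ∈ B, (1 : ℝ) :=
          Finset.sum_le_sum fun i hi => hle1 i (hBrange i hi)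
      _ = B.card := by simp
      _ ≤ (N : ℝ) := by exact_mod_cast hBcard
  -- good intervals
  set c : ℕ → ℕ := fun i => sInf {j | j ≤ N ∧ τ j ≤ t i ∧ t (i + 1) ≤ τ (j + 1)} with hc
  have hcmem : ∀ i ∈ G, c i ≤ N ∧ τ (c i) ≤ t i ∧ t (i + 1) ≤ τ (c i + 1) := by
    intro i hi
    simp only [hG, Finset.mem_filter, Finset.mem_range] at hi
    obtain ⟨j, hj⟩ := hi.2
    exact Nat.sInf_mem (⟨j, hj⟩ : {j | j ≤ N ∧ τ j ≤ t i ∧ t (i + 1) ≤ τ (j + 1)}.Nonempty)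
  have hGrange : ∀ i ∈ G, i < n := by
    intro i hi
    simp only [hG, Finset.mem_filter, Finset.mem_range] at hi
    exact hi.1
  have hmaps : ∀ i ∈ G, c i ∈ Finset.range (N + 1) := fun i hi =>
    Finset.mem_range.mpr (by have := (hcmem i hi).1; omega)
  have hGsum : ∑ i ∈ G, pVarControl x p (t i) (t (i + 1))
      ≤ ∑ j ∈ Finset.range (N + 1), pVarControl x p (τ j) (τ (j + 1)) := by
    rw [← Finset.sum_fiberwise_of_maps_to hmaps
      (fun i => pVarControl x p (t i) (t (i + 1)))]
    apply Finset.sum_le_sum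
    intro j hj
    apply sum_pVarControl_le x p hfin t (G.filter (fun i => c i = j)).card _
      (τ j) (τ (j + 1)) le_rfl (hτle j) (hτstep j) (hτleT (j + 1))
    · intro i hi i' hi' hii'
      have hiG : i ∈ G := Finset.mem_of_mem_filter i hi
      have hi'G : i' ∈ G := Finset.mem_of_mem_filter i' hi'
      exact htmono (i + 1) i' (by omega) (by have := hGrange i' hi'G; omega)
    · intro i hi
      have hiG : i ∈ G := Finset.mem_of_mem_filter i hi
      have hcij : c i = j := by
        simp only [Finset.mem_filter] at hi
        exact hi.2
      obtain ⟨_, h2, h3⟩ := hcmem i hiG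
      rw [hcij] at h2 h3
      exact ⟨h2, (hlt i (hGrange i hiG)).le, h3⟩
  have htotal : ∑ i ∈ Finset.range n, pVarControl x p (t i) (t (i + 1))
      ≤ (∑ j ∈ Finset.range (N + 1), pVarControl x p (τ j) (τ (j + 1))) + N := by
    rw [hsplit]
    exact add_le_add hGsum hBsum
  rw [hRHSsum] at htotal
  linarith
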